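/- Let A be a formula all of whose variables and constants lie in V ∪ {0} (i.e., A contains no occurrence of the constant ⊥), and take P = {⊥}. Then ⊢_{{⊥}} ;A (the {⊥}-sequent with empty antecedent, empty body and stoup A is derivable in ML_{{⊥}}) if and only if ⊢_LJ A. -/

import Mathlib

/-- Formulas of ML_P: `F ::= 0 | ⊥ | X | F∧F | F∨F | F→F` with variables from `V`. -/
inductive Fml (V : Type) : Type where
  | zero : Fml V
  | bot : Fml V
  | var : V → Fml V
  | and : Fml V → Fml V → Fml V
  | or : Fml V → Fml V → Fml V
  | imp : Fml V → Fml V → Fml V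

/-- All formulas of the sequent `Γ ⊢ Δ;Ξ` belong to the set `S`. -/
def SeqIn {V : Type} (S : Set (Fml V)) (Γ Δ : Multiset (Fml V)) (Ξ : Option (Fml V)) : Prop :=
  (∀ A ∈ Γ, A ∈ S) ∧ (∀ A ∈ Δ, A ∈ S) ∧ (∀ A ∈ Ξ, A ∈ S)

/-- Derivability of the `P`-sequent `Γ ⊢ Δ;Ξ` in the system ML_P, where additionally
every sequent occurring in the derivation is required to consist of formulas of `S`
(take `S := Set.univ` for plain derivability), and the cut rules `cut₁`, `cut₂` are
allowed only when the flag `cut` is `true`. -/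
inductive MLPG {V : Type} (P S : Set (Fml V)) (cut : Bool) :
    Multiset (Fml V) → Multiset (Fml V) → Option (Fml V) → Prop where
  | ax (A : Fml V) : SeqIn S {A} 0 (some A) → MLPG P S cut {A} 0 (some A)
  | cut1 {Γ Γ' Δ Δ' : Multiset (Fml V)} {A : Fml V} {Ξ : Option (Fml V)} :
      cut = true → SeqIn S (Γ + Γ') (Δ + Δ') Ξ →
      MLPG P S cut Γ Δ (some A) → MLPG P S cut (Γ' + {A}) Δ' Ξ →
      MLPG P S cut (Γ + Γ') (Δ + Δ') Ξ
  | cut2 {Γ Γ' Δ Δ' : Multiset (Fml V)} {A : Fml V} {Ξ : Option (Fml V)} :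
      cut = true → SeqIn S (Γ + Γ') (Δ + Δ') Ξ →
      MLPG P S cut Γ (Δ + {A}) Ξ → MLPG P S cut (Γ' + {A}) Δ' none →
      MLPG P S cut (Γ + Γ') (Δ + Δ') Ξ
  | der {Γ Δ : Multiset (Fml V)} {A : Fml V} :
      A ∈ P → SeqIn S Γ (Δ + {A}) none →
      MLPG P S cut Γ Δ (some A) → MLPG P S cut Γ (Δ + {A}) none
  | cl {Γ Δ : Multiset (Fml V)} {A : Fml V} {Ξ : Option (Fml V)} :
      SeqIn S (Γ + {A}) Δ Ξ →
      MLPG P S cut (Γ + {A, A}) Δ Ξ → MLPG P S cut (Γ + {A}) Δ Ξ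
  | cr {Γ Δ : Multiset (Fml V)} {A : Fml V} {Ξ : Option (Fml V)} :
      SeqIn S Γ (Δ + {A}) Ξ →
      MLPG P S cut Γ (Δ + {A, A}) Ξ → MLPG P S cut Γ (Δ + {A}) Ξ
  | wl {Γ Δ : Multiset (Fml V)} {A : Fml V} {Ξ : Option (Fml V)} :
      SeqIn S (Γ + {A}) Δ Ξ →
      MLPG P S cut Γ Δ Ξ → MLPG P S cut (Γ + {A}) Δ Ξ
  | wr {Γ Δ : Multiset (Fml V)} {A : Fml V} {Ξ : Option (Fml V)} :
      A ∈ P → SeqIn S Γ (Δ + {A}) Ξ →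
      MLPG P S cut Γ Δ Ξ → MLPG P S cut Γ (Δ + {A}) Ξ
  | zeroL {Γ Δ : Multiset (Fml V)} {Ξ : Option (Fml V)} :
      (∀ A ∈ Δ, A ∈ P) → SeqIn S (Γ + {Fml.zero}) Δ Ξ →
      MLPG P S cut (Γ + {Fml.zero}) Δ Ξ
  | botL : SeqIn S {Fml.bot} 0 none → MLPG P S cut {Fml.bot} 0 none
  | and1L {Γ Δ : Multiset (Fml V)} {A B C : Fml V} :
      A ∉ P → B ∉ P → SeqIn S (Γ + {Fml.and A B}) Δ (some C) →
      MLPG P S cut (Γ + {A, B}) Δ (some C) →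
      MLPG P S cut (Γ + {Fml.and A B}) Δ (some C)
  | and2L {Γ Δ : Multiset (Fml V)} {A B : Fml V} :
      SeqIn S (Γ + {Fml.and A B}) Δ none →
      MLPG P S cut (Γ + {A, B}) Δ none →
      MLPG P S cut (Γ + {Fml.and A B}) Δ none
  | and1R {Γ Γ' Δ Δ' : Multiset (Fml V)} {A B : Fml V} :
      SeqIn S (Γ + Γ') (Δ + Δ') (some (Fml.and A B)) →
      MLPG P S cut Γ Δ (some A) → MLPG P S cut Γ' Δ' (some B) →
      MLPG P S cut (Γ + Γ') (Δ + Δ') (some (Fml.and A B))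
  | and2R {Γ Γ' Δ Δ' : Multiset (Fml V)} {A B : Fml V} :
      SeqIn S (Γ + Γ') (Δ + Δ') (some (Fml.and A B)) →
      MLPG P S cut Γ (Δ + {A}) none → MLPG P S cut Γ' (Δ' + {B}) none →
      MLPG P S cut (Γ + Γ') (Δ + Δ') (some (Fml.and A B))
  | and3R {Γ Γ' Δ Δ' : Multiset (Fml V)} {A B : Fml V} :
      SeqIn S (Γ + Γ') (Δ + Δ') (some (Fml.and A B)) →
      MLPG P S cut Γ Δ (some A) → MLPG P S cut Γ' (Δ' + {B}) none →
      MLPG P S cut (Γ + Γ') (Δ + Δ') (some (Fml.and A B))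
  | and4R {Γ Γ' Δ Δ' : Multiset (Fml V)} {A B : Fml V} :
      SeqIn S (Γ + Γ') (Δ + Δ') (some (Fml.and A B)) →
      MLPG P S cut Γ (Δ + {A}) none → MLPG P S cut Γ' Δ' (some B) →
      MLPG P S cut (Γ + Γ') (Δ + Δ') (some (Fml.and A B))
  | or1L {Γ Δ : Multiset (Fml V)} {A B C : Fml V} :
      A ∉ P → B ∉ P → SeqIn S (Γ + {Fml.or A B}) Δ (some C) →
      MLPG P S cut (Γ + {A}) Δ (some C) → MLPG P S cut (Γ + {B}) Δ (some C) →
      MLPG P S cut (Γ + {Fml.or A B}) Δ (some C)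
  | or2L {Γ Δ : Multiset (Fml V)} {A B : Fml V} :
      SeqIn S (Γ + {Fml.or A B}) Δ none →
      MLPG P S cut (Γ + {A}) Δ none → MLPG P S cut (Γ + {B}) Δ none →
      MLPG P S cut (Γ + {Fml.or A B}) Δ none
  | or1R {Γ Δ : Multiset (Fml V)} {A B : Fml V} :
      SeqIn S Γ Δ (some (Fml.or A B)) →
      MLPG P S cut Γ Δ (some A) → MLPG P S cut Γ Δ (some (Fml.or A B))
  | or2R {Γ Δ : Multiset (Fml V)} {A B : Fml V} :
      SeqIn S Γ Δ (some (Fml.or A B)) →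
      MLPG P S cut Γ Δ (some B) → MLPG P S cut Γ Δ (some (Fml.or A B))
  | or3R {Γ Δ : Multiset (Fml V)} {A B : Fml V} :
      SeqIn S Γ Δ (some (Fml.or A B)) →
      MLPG P S cut Γ (Δ + {A}) none → MLPG P S cut Γ Δ (some (Fml.or A B))
  | or4R {Γ Δ : Multiset (Fml V)} {A B : Fml V} :
      SeqIn S Γ Δ (some (Fml.or A B)) →
      MLPG P S cut Γ (Δ + {B}) none → MLPG P S cut Γ Δ (some (Fml.or A B))
  | imp1L {Γ Γ' Δ Δ' : Multiset (Fml V)} {A B C : Fml V} :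
      B ∉ P → SeqIn S (Γ + Γ' + {Fml.imp A B}) (Δ + Δ') (some C) →
      MLPG P S cut (Γ + {B}) Δ (some C) → MLPG P S cut Γ' Δ' (some A) →
      MLPG P S cut (Γ + Γ' + {Fml.imp A B}) (Δ + Δ') (some C)
  | imp2L {Γ Γ' Δ Δ' : Multiset (Fml V)} {A B : Fml V} :
      SeqIn S (Γ + Γ' + {Fml.imp A B}) (Δ + Δ') none →
      MLPG P S cut (Γ + {B}) Δ none → MLPG P S cut Γ' Δ' (some A) →
      MLPG P S cut (Γ + Γ' + {Fml.imp A B}) (Δ + Δ') none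
  | imp3L {Γ Γ' Δ Δ' : Multiset (Fml V)} {A B : Fml V} {Ξ : Option (Fml V)} :
      SeqIn S (Γ + Γ' + {Fml.imp A B}) (Δ + Δ') Ξ →
      MLPG P S cut (Γ + {B}) Δ none → MLPG P S cut Γ' (Δ' + {A}) Ξ →
      MLPG P S cut (Γ + Γ' + {Fml.imp A B}) (Δ + Δ') Ξ
  | imp1R {Γ Δ : Multiset (Fml V)} {A B : Fml V} :
      SeqIn S Γ Δ (some (Fml.imp A B)) →
      MLPG P S cut (Γ + {A}) Δ (some B) → MLPG P S cut Γ Δ (some (Fml.imp A B))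
  | imp2R {Γ Δ : Multiset (Fml V)} {A B : Fml V} :
      SeqIn S Γ Δ (some (Fml.imp A B)) →
      MLPG P S cut (Γ + {A}) (Δ + {B}) none → MLPG P S cut Γ Δ (some (Fml.imp A B))

/-- `Γ ⊢_P Δ;Ξ` : the `P`-sequent `Γ ⊢ Δ;Ξ` is derivable in ML_P. -/
def MLPDer {V : Type} (P : Set (Fml V)) (Γ Δ : Multiset (Fml V)) (Ξ : Option (Fml V)) : Prop :=
  MLPG P Set.univ true Γ Δ Ξ

/-- `VarsOK W zeroOK botOK A` : every propositional variable of `A` lies in `W`,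
the constant `0` occurs in `A` only if `zeroOK`, and `⊥` occurs only if `botOK`. -/
def VarsOK {V : Type} (W : Set V) (zeroOK botOK : Prop) : Fml V → Prop
  | Fml.zero => zeroOK
  | Fml.bot => botOK
  | Fml.var x => x ∈ W
  | Fml.and A B => VarsOK W zeroOK botOK A ∧ VarsOK W zeroOK botOK B
  | Fml.or A B => VarsOK W zeroOK botOK A ∧ VarsOK W zeroOK botOK B
  | Fml.imp A B => VarsOK W zeroOK botOK A ∧ VarsOK W zeroOK botOK B

/-- The intuitionistic sequent calculus LJ (a multiset on the left, one formula on
the right), with `0` as its absurdity constant. -/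
inductive LJ {V : Type} : Multiset (Fml V) → Fml V → Prop where
  | ax (A : Fml V) : LJ {A} A
  | cut {Γ Γ' : Multiset (Fml V)} {A B : Fml V} :
      LJ Γ A → LJ (Γ' + {A}) B → LJ (Γ + Γ') B
  | cl {Γ : Multiset (Fml V)} {A B : Fml V} :
      LJ (Γ + {A, A}) B → LJ (Γ + {A}) B
  | wl {Γ : Multiset (Fml V)} {A B : Fml V} :
      LJ Γ B → LJ (Γ + {A}) B
  | zeroL {Γ : Multiset (Fml V)} {A : Fml V} : LJ (Γ + {Fml.zero}) A
  | andL {Γ : Multiset (Fml V)} {A B C : Fml V} :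
      LJ (Γ + {A, B}) C → LJ (Γ + {Fml.and A B}) C
  | andR {Γ Γ' : Multiset (Fml V)} {A B : Fml V} :
      LJ Γ A → LJ Γ' B → LJ (Γ + Γ') (Fml.and A B)
  | orL {Γ : Multiset (Fml V)} {A B C : Fml V} :
      LJ (Γ + {A}) C → LJ (Γ + {B}) C → LJ (Γ + {Fml.or A B}) C
  | orR1 {Γ : Multiset (Fml V)} {A B : Fml V} :
      LJ Γ A → LJ Γ (Fml.or A B)
  | orR2 {Γ : Multiset (Fml V)} {A B : Fml V} :
      LJ Γ B → LJ Γ (Fml.or A B)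
  | impL {Γ Γ' : Multiset (Fml V)} {A B C : Fml V} :
      LJ (Γ + {B}) C → LJ Γ' A → LJ (Γ + Γ' + {Fml.imp A B}) C
  | impR {Γ : Multiset (Fml V)} {A B : Fml V} :
      LJ (Γ + {A}) B → LJ Γ (Fml.imp A B)

namespace LjCoding

variable {V : Type}

/-- Translation sending `⊥` to `0`. -/
def tr : Fml V → Fml V
  | Fml.zero => Fml.zero
  | Fml.bot => Fml.zero
  | Fml.var x => Fml.var x
  | Fml.and A B => Fml.and (tr A) (tr B)
  | Fml.or A B => Fml.or (tr A) (tr B)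
  | Fml.imp A B => Fml.imp (tr A) (tr B)

lemma tr_ne_bot (A : Fml V) : tr A ≠ Fml.bot := by
  cases A <;> simp [tr]

lemma tr_notmem (A : Fml V) : tr A ∉ ({Fml.bot} : Set (Fml V)) := by
  simpa using tr_ne_bot A

lemma tr_eq (A : Fml V) (h : VarsOK Set.univ True False A) : tr A = A := by
  induction A with
  | zero => rfl
  | bot => exact absurd h (by simp [VarsOK])
  | var x => rfl
  | and A B ihA ihB => simp [tr, ihA h.1, ihB h.2]
  | or A B ihA ihB => simp [tr, ihA h.1, ihB h.2]
  | imp A B ihA ihB => simp [tr, ihA h.1, ihB h.2]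

lemma seqU (Γ Δ : Multiset (Fml V)) (Ξ : Option (Fml V)) :
    SeqIn (Set.univ : Set (Fml V)) Γ Δ Ξ :=
  ⟨fun _ _ => trivial, fun _ _ => trivial, fun _ _ => trivial⟩

lemma lj_weak {Γ : Multiset (Fml V)} {B : Fml V} (Γ' : Multiset (Fml V))
    (h : LJ Γ B) : LJ (Γ + Γ') B := by
  induction Γ' using Multiset.induction with
  | empty => simpa using h
  | cons a s ih =>
    have : Γ + a ::ₘ s = (Γ + s) + {a} := by
      rw [Multiset.add_cons, add_comm (Γ + s) ({a} : Multiset (Fml V)),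
        Multiset.singleton_add]
    rw [this]
    exact LJ.wl ih

lemma lj_exfalso {Γ : Multiset (Fml V)} (C : Fml V) (h : LJ Γ Fml.zero) :
    LJ Γ C := by
  have h2 : LJ ((0 : Multiset (Fml V)) + {Fml.zero}) C := LJ.zeroL
  have := LJ.cut h h2
  simpa using this

/-- Interpretation of a stoup. -/
def trS : Option (Fml V) → Fml V
  | none => Fml.zero
  | some A => tr A

lemma mlToLJ {Γ Δ : Multiset (Fml V)} {Ξ : Option (Fml V)}
    (h : MLPG ({Fml.bot} : Set (Fml V)) Set.univ true Γ Δ Ξ) :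
    LJ (Γ.map tr) (trS Ξ) := by
  induction h with
  | ax A _ => simpa [trS] using LJ.ax (tr A)
  | @cut1 Γ₀ Γ₀' Δ₀ Δ₀' A₀ Ξ₀ _ _ d1 d2 ih1 ih2 =>
    have := LJ.cut (Γ' := Multiset.map tr Γ₀') (B := trS Ξ₀) ih1 (by simpa [trS] using ih2)
    simpa using this
  | @cut2 Γ₀ Γ₀' Δ₀ Δ₀' A₀ Ξ₀ _ _ d1 d2 ih1 ih2 =>
    simpa using lj_weak (Multiset.map tr Γ₀') ih1
  | @der Γ₀ Δ₀ A₀ hP _ d ih =>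
    rw [Set.mem_singleton_iff] at hP
    simpa [trS, hP, tr] using ih
  | @cl Γ₀ Δ₀ A₀ Ξ₀ _ d ih =>
    have := LJ.cl (Γ := Multiset.map tr Γ₀) (A := tr A₀) (by simpa using ih)
    simpa using this
  | cr _ d ih => exact ih
  | @wl Γ₀ Δ₀ A₀ Ξ₀ _ d ih =>
    have := LJ.wl (Γ := Multiset.map tr Γ₀) (A := tr A₀) ih
    simpa using this
  | wr _ _ d ih => exact ih
  | @zeroL Γ₀ Δ₀ Ξ₀ _ _ =>
    have := LJ.zeroL (Γ := Multiset.map tr Γ₀) (A := trS Ξ₀)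
    simpa [tr] using this
  | botL _ =>
    have := LJ.zeroL (Γ := (0 : Multiset (Fml V))) (A := Fml.zero)
    simpa [trS, tr] using this
  | @and1L Γ₀ Δ₀ A₀ B₀ C₀ _ _ _ d ih =>
    have := LJ.andL (Γ := Multiset.map tr Γ₀) (by simpa using ih)
    simpa [tr] using this
  | @and2L Γ₀ Δ₀ A₀ B₀ _ d ih =>
    have := LJ.andL (Γ := Multiset.map tr Γ₀) (by simpa using ih)
    simpa [tr] using this
  | and1R _ d1 d2 ih1 ih2 =>
    have := LJ.andR ih1 ih2
    simpa [trS, tr] using this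
  | @and2R Γ₀ Γ₀' Δ₀ Δ₀' A₀ B₀ _ d1 d2 ih1 ih2 =>
    have := LJ.andR (lj_exfalso (tr A₀) ih1) (lj_exfalso (tr B₀) ih2)
    simpa [trS, tr] using this
  | @and3R Γ₀ Γ₀' Δ₀ Δ₀' A₀ B₀ _ d1 d2 ih1 ih2 =>
    have := LJ.andR ih1 (lj_exfalso (tr B₀) ih2)
    simpa [trS, tr] using this
  | @and4R Γ₀ Γ₀' Δ₀ Δ₀' A₀ B₀ _ d1 d2 ih1 ih2 =>
    have := LJ.andR (lj_exfalso (tr A₀) ih1) ih2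
    simpa [trS, tr] using this
  | @or1L Γ₀ Δ₀ A₀ B₀ C₀ _ _ _ d1 d2 ih1 ih2 =>
    have := LJ.orL (Γ := Multiset.map tr Γ₀) (by simpa using ih1) (by simpa using ih2)
    simpa [tr] using this
  | @or2L Γ₀ Δ₀ A₀ B₀ _ d1 d2 ih1 ih2 =>
    have := LJ.orL (Γ := Multiset.map tr Γ₀) (by simpa using ih1) (by simpa using ih2)
    simpa [tr] using this
  | or1R _ d ih => simpa [trS, tr] using LJ.orR1 ih
  | or2R _ d ih => simpa [trS, tr] using LJ.orR2 ih
  | @or3R Γ₀ Δ₀ A₀ B₀ _ d ih =>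
    simpa [trS, tr] using LJ.orR1 (B := tr B₀) (lj_exfalso (tr A₀) ih)
  | @or4R Γ₀ Δ₀ A₀ B₀ _ d ih =>
    simpa [trS, tr] using LJ.orR2 (A := tr A₀) (lj_exfalso (tr B₀) ih)
  | @imp1L Γ₀ Γ₀' Δ₀ Δ₀' A₀ B₀ C₀ _ _ d1 d2 ih1 ih2 =>
    have := LJ.impL (Γ := Multiset.map tr Γ₀) (by simpa using ih1) ih2
    simpa [tr, trS] using this
  | @imp2L Γ₀ Γ₀' Δ₀ Δ₀' A₀ B₀ _ d1 d2 ih1 ih2 =>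
    have := LJ.impL (Γ := Multiset.map tr Γ₀) (C := Fml.zero) (by simpa [trS] using ih1) ih2
    simpa [trS, tr] using this
  | @imp3L Γ₀ Γ₀' Δ₀ Δ₀' A₀ B₀ Ξ₀ _ d1 d2 ih1 ih2 =>
    have h1 := lj_weak (Multiset.map tr Γ₀ + {tr (Fml.imp A₀ B₀)}) ih2
    have heq : Multiset.map tr (Γ₀ + Γ₀' + {Fml.imp A₀ B₀}) =
        Multiset.map tr Γ₀' + (Multiset.map tr Γ₀ + {tr (Fml.imp A₀ B₀)}) := by
      simp [Multiset.map_add]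
      rw [← add_assoc, add_comm (Multiset.map tr Γ₀')]
    rw [heq]
    exact h1
  | imp1R _ d ih =>
    have := LJ.impR (by simpa using ih)
    simpa [trS, tr] using this
  | @imp2R Γ₀ Δ₀ A₀ B₀ _ d ih =>
    have := LJ.impR (lj_exfalso (tr B₀) (by simpa [trS] using ih))
    simpa [trS, tr] using this

lemma ljToML {Γ : Multiset (Fml V)} {B : Fml V} (h : LJ Γ B) :
    MLPG ({Fml.bot} : Set (Fml V)) Set.univ true (Γ.map tr) 0 (some (tr B)) := by
  induction h with
  | ax A => simpa using MLPG.ax (tr A) (seqU _ _ _)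
  | cut d1 d2 ih1 ih2 =>
    have := MLPG.cut1 (Δ := 0) (Δ' := 0) rfl (seqU _ _ _) ih1 (by simpa using ih2)
    simpa using this
  | cl d ih =>
    have := MLPG.cl (Δ := 0) (seqU _ _ _) (by simpa using ih)
    simpa using this
  | @wl Γ₀ A₀ B₀ d ih =>
    have := MLPG.wl (Δ := 0) (A := tr A₀) (seqU _ _ _) ih
    simpa using this
  | @zeroL Γ₀ A₀ =>
    have := MLPG.zeroL (P := ({Fml.bot} : Set (Fml V))) (S := Set.univ) (cut := true)
      (Γ := Multiset.map tr Γ₀) (Δ := 0) (Ξ := some (tr A₀)) (by simp) (seqU _ _ _)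
    simpa [tr] using this
  | andL d ih =>
    have := MLPG.and1L (tr_notmem _) (tr_notmem _) (seqU _ _ _) (by simpa using ih)
    simpa [tr] using this
  | andR d1 d2 ih1 ih2 =>
    have := MLPG.and1R (Δ := 0) (Δ' := 0) (seqU _ _ _) ih1 ih2
    simpa [tr] using this
  | orL d1 d2 ih1 ih2 =>
    have := MLPG.or1L (tr_notmem _) (tr_notmem _) (seqU _ _ _)
      (by simpa using ih1) (by simpa using ih2)
    simpa [tr] using this
  | orR1 d ih => simpa [tr] using MLPG.or1R (seqU _ _ _) ih
  | orR2 d ih => simpa [tr] using MLPG.or2R (seqU _ _ _) ih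
  | impL d1 d2 ih1 ih2 =>
    have := MLPG.imp1L (Δ := 0) (Δ' := 0) (tr_notmem _) (seqU _ _ _)
      (by simpa using ih1) ih2
    simpa [tr] using this
  | impR d ih =>
    have := MLPG.imp1R (seqU _ _ _) (by simpa using ih)
    simpa [tr] using this

end LjCoding

/-- If `A` is a formula without the constant `⊥` and `P = {⊥}`, then
`⊢_{⊥} ;A` iff `⊢_LJ A`. -/
theorem lj_coding_formula {V : Type} (A : Fml V) (hA : VarsOK Set.univ True False A) :
    MLPDer ({Fml.bot} : Set (Fml V)) 0 0 (some A) ↔ LJ (0 : Multiset (Fml V)) A := by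
  constructor
  · intro h
    have := LjCoding.mlToLJ h
    simpa [LjCoding.trS, LjCoding.tr_eq A hA] using this
  · intro h
    have := LjCoding.ljToML h
    simpa [LjCoding.tr_eq A hA, MLPDer] using this
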